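/- Let $\Phi : \mathbb{R}^n \to \mathbb{R}^m$ be continuously differentiable with Lipschitz derivative near $\bar x$, let $D \subset \mathbb{R}^m$ be closed, and let $C := \{x \mid \Phi(x) \in D\}$. If $\Phi'(\bar x)$ has full row rank $m$, then $T^{\mathrm{P}}_C(\bar x) = \{d \in \mathbb{R}^n \mid \Phi'(\bar x)d \in T^{\mathrm{P}}_D(\Phi(\bar x))\}$. -/

import Mathlib

open Filter Topology Set

/-- Tangent (contingent) cone via sequences. -/
def seqTangent {E : Type*} [AddCommGroup E] [Module ℝ E] [TopologicalSpace E]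
    (C : Set E) (x : E) : Set E :=
  {d | ∃ (dk : ℕ → E) (tk : ℕ → ℝ),
    Tendsto dk atTop (𝓝 d) ∧ Tendsto tk atTop (𝓝 0) ∧
    (∀ k, 0 < tk k) ∧ ∀ k, x + tk k • dk k ∈ C}

/-- Limiting tangent cone. -/
def limitingTangent {E : Type*} [AddCommGroup E] [Module ℝ E] [TopologicalSpace E]
    (C : Set E) (xb : E) : Set E :=
  {d | ∃ (xk : ℕ → E) (dk : ℕ → E),
    Tendsto xk atTop (𝓝 xb) ∧ Tendsto dk atTop (𝓝 d) ∧
    ∀ k, xk k ∈ C ∧ dk k ∈ seqTangent C (xk k)}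

/-- Paratingent cone. -/
def paratingent {E : Type*} [AddCommGroup E] [Module ℝ E] [TopologicalSpace E]
    (C : Set E) (xb : E) : Set E :=
  {d | ∃ (xk dk : ℕ → E) (tk : ℕ → ℝ),
    Tendsto xk atTop (𝓝 xb) ∧ Tendsto dk atTop (𝓝 d) ∧ Tendsto tk atTop (𝓝 0) ∧
    (∀ k, 0 < tk k) ∧ ∀ k, xk k ∈ C ∧ xk k + tk k • dk k ∈ C}

/-- Auxiliary little-o statement along sequences, from strict differentiability. -/
lemma aux_littleo {E F : Type*} [NormedAddCommGroup E] [NormedSpace ℝ E]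
    [NormedAddCommGroup F] [NormedSpace ℝ F]
    {Φ : E → F} {A : E →L[ℝ] F} {xb : E} (hA : HasStrictFDerivAt Φ A xb)
    {xk dk : ℕ → E} {tk : ℕ → ℝ} {d : E}
    (hxk : Tendsto xk atTop (𝓝 xb)) (hdk : Tendsto dk atTop (𝓝 d))
    (htk : Tendsto tk atTop (𝓝 0)) :
    Tendsto (fun k => (tk k)⁻¹ • (Φ (xk k + tk k • dk k) - Φ (xk k) - A (tk k • dk k)))
      atTop (𝓝 0) := by
  have hsd : Tendsto (fun k => tk k • dk k) atTop (𝓝 0) := by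
    have := htk.smul hdk
    simpa using this
  have hp : Tendsto (fun k => (xk k + tk k • dk k, xk k)) atTop (𝓝 (xb, xb)) := by
    have h1 : Tendsto (fun k => xk k + tk k • dk k) atTop (𝓝 xb) := by
      simpa using hxk.add hsd
    exact h1.prodMk_nhds hxk
  have h1 := hA.isLittleO.comp_tendsto hp
  simp only [Function.comp_def, add_sub_cancel_left] at h1
  have h2 : (fun k => tk k • dk k) =O[atTop] tk := by
    rw [Asymptotics.isBigO_iff]
    refine ⟨‖d‖ + 1, ?_⟩
    filter_upwards [hdk.norm.eventually_le_const (lt_add_one ‖d‖)] with k hk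
    rw [norm_smul]
    calc ‖tk k‖ * ‖dk k‖ ≤ ‖tk k‖ * (‖d‖ + 1) :=
          mul_le_mul_of_nonneg_left hk (norm_nonneg _)
      _ = (‖d‖ + 1) * ‖tk k‖ := mul_comm _ _
  have h3 : (fun k => ‖Φ (xk k + tk k • dk k) - Φ (xk k) - A (tk k • dk k)‖) =o[atTop]
      fun k => ‖tk k‖ := Asymptotics.isLittleO_norm_norm.mpr (h1.trans_isBigO h2)
  have h4 := h3.tendsto_div_nhds_zero
  rw [tendsto_zero_iff_norm_tendsto_zero]
  refine h4.congr fun k => ?_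
  rw [norm_smul, norm_inv, div_eq_inv_mul]

theorem paratingent_preimage_equality {n m : ℕ}
    (Φ : EuclideanSpace ℝ (Fin n) → EuclideanSpace ℝ (Fin m))
    (hΦ : ContDiff ℝ 1 Φ)
    (D : Set (EuclideanSpace ℝ (Fin m))) (hD : IsClosed D)
    (xb : EuclideanSpace ℝ (Fin n)) (hx : Φ xb ∈ D)
    (hlip : ∃ (L : NNReal) (ε : ℝ), 0 < ε ∧
      LipschitzOnWith L (fderiv ℝ Φ) (Metric.ball xb ε))
    (hsurj : Function.Surjective (fderiv ℝ Φ xb)) :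
    paratingent (Φ ⁻¹' D) xb
      = {d : EuclideanSpace ℝ (Fin n) | fderiv ℝ Φ xb d ∈ paratingent D (Φ xb)} := by
  have hA : HasStrictFDerivAt Φ (fderiv ℝ Φ xb) xb :=
    hΦ.contDiffAt.hasStrictFDerivAt one_ne_zero
  ext d
  simp only [mem_setOf_eq]
  constructor
  · -- easy direction
    rintro ⟨xk, dk, tk, hxk, hdk, htk, htkpos, hmem⟩
    refine ⟨fun k => Φ (xk k),
      fun k => fderiv ℝ Φ xb (dk k) +
        (tk k)⁻¹ • (Φ (xk k + tk k • dk k) - Φ (xk k) - fderiv ℝ Φ xb (tk k • dk k)),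
      tk, (hΦ.continuous.tendsto xb).comp hxk, ?_, htk, htkpos, fun k => ?_⟩
    · have h0 := aux_littleo hA hxk hdk htk
      have h1 : Tendsto (fun k => fderiv ℝ Φ xb (dk k)) atTop (𝓝 (fderiv ℝ Φ xb d)) :=
        ((fderiv ℝ Φ xb).continuous.tendsto d).comp hdk
      simpa using h1.add h0
    · refine ⟨(hmem k).1, ?_⟩
      have htkne : tk k ≠ 0 := (htkpos k).ne'
      have heq : Φ (xk k) + tk k • (fderiv ℝ Φ xb (dk k) +
          (tk k)⁻¹ • (Φ (xk k + tk k • dk k) - Φ (xk k) - fderiv ℝ Φ xb (tk k • dk k)))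
          = Φ (xk k + tk k • dk k) := by
        rw [smul_add, smul_inv_smul₀ htkne, ← map_smul]
        abel
      rw [heq]
      exact (hmem k).2
  · -- hard direction
    rintro ⟨yk, ek, tk, hyk, hek, htk, htkpos, hmem⟩
    have hrange : (fderiv ℝ Φ xb).range = ⊤ := (LinearMap.range_eq_top (f := (fderiv ℝ Φ xb : EuclideanSpace ℝ (Fin n) →ₗ[ℝ] EuclideanSpace ℝ (Fin m)))).2 hsurj
    set f'symm := (fderiv ℝ Φ xb).nonlinearRightInverseOfSurjective hrange with hf'symm
    set c : NNReal := f'symm.nnnorm⁻¹ / 2 with hc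
    have f'symm_pos : 0 < f'symm.nnnorm :=
      (fderiv ℝ Φ xb).nonlinearRightInverseOfSurjective_nnnorm_pos hrange
    have cpos : 0 < c := by
      rw [hc]
      exact div_pos (inv_pos.mpr f'symm_pos) two_pos
    have cposR : (0:ℝ) < (c:ℝ) := cpos
    obtain ⟨s, hs, happ⟩ := hA.approximates_deriv_on_nhds (Or.inr cpos)
    obtain ⟨r0, hr0, hr0sub⟩ := Metric.mem_nhds_iff.1 hs
    -- metric regularity key lemma
    have key : ∀ b y, dist b xb + (c:ℝ)⁻¹ * dist y (Φ b) < r0 →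
        ∃ x', Φ x' = y ∧ dist x' b ≤ (c:ℝ)⁻¹ * dist y (Φ b) := by
      intro b y hby
      have ε0 : (0:ℝ) ≤ (c:ℝ)⁻¹ * dist y (Φ b) :=
        mul_nonneg (inv_nonneg.2 cposR.le) dist_nonneg
      have hsub : Metric.closedBall b ((c:ℝ)⁻¹ * dist y (Φ b)) ⊆ s := by
        intro z hz
        apply hr0sub
        rw [Metric.mem_ball]
        calc dist z xb ≤ dist z b + dist b xb := dist_triangle _ _ _
          _ ≤ (c:ℝ)⁻¹ * dist y (Φ b) + dist b xb :=
              add_le_add_left (Metric.mem_closedBall.1 hz) _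
          _ < r0 := by linarith
      have hsurjon := happ.surjOn_closedBall_of_nonlinearRightInverse f'symm ε0 hsub
      have hf'ne : ((f'symm.nnnorm : ℝ)) ≠ 0 := by
        exact_mod_cast f'symm_pos.ne'
      have hrad : ((f'symm.nnnorm : ℝ)⁻¹ - (c:ℝ)) * ((c:ℝ)⁻¹ * dist y (Φ b)) = dist y (Φ b) := by
        have h2 : (c:ℝ) = (f'symm.nnnorm:ℝ)⁻¹ / 2 := by
          rw [hc]; push_cast; ring
        rw [h2]
        field_simp
        ring
      obtain ⟨x', hx'mem, hΦx'⟩ := hsurjon (by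
        rw [hrad]
        exact Metric.mem_closedBall.2 le_rfl)
      exact ⟨x', hΦx', Metric.mem_closedBall.1 hx'mem⟩
    -- choose xk with Φ (xk k) = yk k near xb
    have hαk : Tendsto (fun k => (c:ℝ)⁻¹ * dist (yk k) (Φ xb)) atTop (𝓝 0) := by
      have h0 := tendsto_iff_dist_tendsto_zero.1 hyk
      simpa using h0.const_mul (c:ℝ)⁻¹
    have hcond1 : ∀ᶠ k in atTop, (c:ℝ)⁻¹ * dist (yk k) (Φ xb) < r0 :=
      hαk.eventually_lt_const hr0
    have hxk_ex : ∀ k, ∃ x, ((c:ℝ)⁻¹ * dist (yk k) (Φ xb) < r0 →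
        Φ x = yk k ∧ dist x xb ≤ (c:ℝ)⁻¹ * dist (yk k) (Φ xb)) := by
      intro k
      by_cases h : (c:ℝ)⁻¹ * dist (yk k) (Φ xb) < r0
      · obtain ⟨x', h1, h2⟩ := key xb (yk k) (by simpa using h)
        exact ⟨x', fun _ => ⟨h1, h2⟩⟩
      · exact ⟨xb, fun h' => absurd h' h⟩
    choose xk hxk using hxk_ex
    have hxkP : ∀ᶠ k in atTop,
        Φ (xk k) = yk k ∧ dist (xk k) xb ≤ (c:ℝ)⁻¹ * dist (yk k) (Φ xb) :=
      hcond1.mono fun k h => hxk k h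
    have hxk_t : Tendsto xk atTop (𝓝 xb) := by
      rw [tendsto_iff_dist_tendsto_zero]
      exact squeeze_zero' (Eventually.of_forall fun k => dist_nonneg)
        (hxkP.mono fun k h => h.2) hαk
    -- little-o correction term
    have hsm := aux_littleo hA hxk_t (tendsto_const_nhds (x := d)) htk
    set ok : ℕ → EuclideanSpace ℝ (Fin m) :=
      fun k => Φ (xk k + tk k • d) - Φ (xk k) - fderiv ℝ Φ xb (tk k • d) with hok_def
    set δ : ℕ → ℝ := fun k => ‖(tk k)⁻¹ • ok k‖ + ‖fderiv ℝ Φ xb d - ek k‖ with hδ_def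
    have hδ : Tendsto δ atTop (𝓝 0) := by
      have h1 : Tendsto (fun k => ‖(tk k)⁻¹ • ok k‖) atTop (𝓝 0) := by
        simpa only [norm_zero] using hsm.norm
      have h2 : Tendsto (fun k => ‖fderiv ℝ Φ xb d - ek k‖) atTop (𝓝 0) := by
        have h3 : Tendsto (fun k => fderiv ℝ Φ xb d - ek k) atTop (𝓝 0) := by
          simpa using (tendsto_const_nhds (x := fderiv ℝ Φ xb d)).sub hek
        simpa using h3.norm
      simpa using h1.add h2
    set bk : ℕ → EuclideanSpace ℝ (Fin n) := fun k => xk k + tk k • d with hbk_def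
    set zk : ℕ → EuclideanSpace ℝ (Fin m) := fun k => yk k + tk k • ek k with hzk_def
    have hbk : Tendsto bk atTop (𝓝 xb) := by
      have h1 : Tendsto (fun k => tk k • d) atTop (𝓝 0) := by
        simpa using htk.smul (tendsto_const_nhds (x := d))
      simpa [hbk_def] using hxk_t.add h1
    have hdistz : ∀ᶠ k in atTop, dist (zk k) (Φ (bk k)) ≤ tk k * δ k := by
      filter_upwards [hxkP] with k hk
      have heq : Φ (bk k) - zk k = ok k + tk k • (fderiv ℝ Φ xb d - ek k) := by
        simp only [hbk_def, hzk_def, hok_def, ← hk.1, map_smul, smul_sub]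
        abel
      have hokn : ‖ok k‖ = tk k * ‖(tk k)⁻¹ • ok k‖ := by
        rw [norm_smul, norm_inv, Real.norm_eq_abs, abs_of_pos (htkpos k),
          mul_inv_cancel_left₀ (htkpos k).ne']
      rw [dist_comm, dist_eq_norm, heq]
      calc ‖ok k + tk k • (fderiv ℝ Φ xb d - ek k)‖
          ≤ ‖ok k‖ + ‖tk k • (fderiv ℝ Φ xb d - ek k)‖ := norm_add_le _ _
        _ = tk k * ‖(tk k)⁻¹ • ok k‖ + tk k * ‖fderiv ℝ Φ xb d - ek k‖ := by
            rw [norm_smul, Real.norm_eq_abs, abs_of_pos (htkpos k), hokn]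
        _ = tk k * δ k := by rw [hδ_def]; ring
    have hcond2 : ∀ᶠ k in atTop,
        dist (bk k) xb + (c:ℝ)⁻¹ * dist (zk k) (Φ (bk k)) < r0 := by
      have hg : Tendsto (fun k => dist (bk k) xb + (c:ℝ)⁻¹ * (tk k * δ k)) atTop (𝓝 0) := by
        have h1 := tendsto_iff_dist_tendsto_zero.1 hbk
        have h2 : Tendsto (fun k => (c:ℝ)⁻¹ * (tk k * δ k)) atTop (𝓝 0) := by
          simpa using (htk.mul hδ).const_mul (c:ℝ)⁻¹
        simpa using h1.add h2
      filter_upwards [hg.eventually_lt_const hr0, hdistz] with k h1 h2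
      have h3 : (c:ℝ)⁻¹ * dist (zk k) (Φ (bk k)) ≤ (c:ℝ)⁻¹ * (tk k * δ k) :=
        mul_le_mul_of_nonneg_left h2 (inv_nonneg.2 cposR.le)
      linarith
    have hx'_ex : ∀ k, ∃ x',
        (dist (bk k) xb + (c:ℝ)⁻¹ * dist (zk k) (Φ (bk k)) < r0 →
          Φ x' = zk k ∧ dist x' (bk k) ≤ (c:ℝ)⁻¹ * dist (zk k) (Φ (bk k))) := by
      intro k
      by_cases h : dist (bk k) xb + (c:ℝ)⁻¹ * dist (zk k) (Φ (bk k)) < r0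
      · obtain ⟨x', h1, h2⟩ := key (bk k) (zk k) h
        exact ⟨x', fun _ => ⟨h1, h2⟩⟩
      · exact ⟨xb, fun h' => absurd h' h⟩
    choose x' hx' using hx'_ex
    have hx'P : ∀ᶠ k in atTop,
        Φ (x' k) = zk k ∧ dist (x' k) (bk k) ≤ (c:ℝ)⁻¹ * dist (zk k) (Φ (bk k)) :=
      hcond2.mono fun k h => hx' k h
    set dk : ℕ → EuclideanSpace ℝ (Fin n) := fun k => (tk k)⁻¹ • (x' k - xk k) with hdk_def
    have hdkd : Tendsto dk atTop (𝓝 d) := by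
      rw [← tendsto_sub_nhds_zero_iff, tendsto_zero_iff_norm_tendsto_zero]
      refine squeeze_zero' (Eventually.of_forall fun k => norm_nonneg _) ?_
        (show Tendsto (fun k => (c:ℝ)⁻¹ * δ k) atTop (𝓝 0) by
          simpa using hδ.const_mul (c:ℝ)⁻¹)
      filter_upwards [hx'P, hdistz] with k hk hk2
      have h1 : dk k - d = (tk k)⁻¹ • (x' k - bk k) := by
        simp only [hdk_def, hbk_def, sub_add_eq_sub_sub, smul_sub,
          inv_smul_smul₀ (htkpos k).ne']
      have h2 : ‖x' k - bk k‖ ≤ (c:ℝ)⁻¹ * (tk k * δ k) := by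
        rw [← dist_eq_norm]
        exact le_trans hk.2 (mul_le_mul_of_nonneg_left hk2 (inv_nonneg.2 cposR.le))
      rw [h1, norm_smul, norm_inv, Real.norm_eq_abs, abs_of_pos (htkpos k)]
      calc (tk k)⁻¹ * ‖x' k - bk k‖ ≤ (tk k)⁻¹ * ((c:ℝ)⁻¹ * (tk k * δ k)) :=
            mul_le_mul_of_nonneg_left h2 (inv_nonneg.2 (htkpos k).le)
        _ = (c:ℝ)⁻¹ * δ k := by
            have ht : tk k ≠ 0 := (htkpos k).ne'
            have hcne : (c:ℝ) ≠ 0 := cposR.ne'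
            field_simp
    -- assemble, shifting indices so the eventual properties hold everywhere
    obtain ⟨N, hN⟩ := eventually_atTop.1 (hxkP.and hx'P)
    refine ⟨fun k => xk (k + N), fun k => dk (k + N), fun k => tk (k + N),
      hxk_t.comp (tendsto_add_atTop_nat N), hdkd.comp (tendsto_add_atTop_nat N),
      htk.comp (tendsto_add_atTop_nat N), fun k => htkpos _, fun k => ?_⟩
    obtain ⟨⟨hΦx, -⟩, hΦx', -⟩ := hN (k + N) (Nat.le_add_left N k)
    constructor
    · show Φ (xk (k + N)) ∈ D
      rw [hΦx]
      exact (hmem (k + N)).1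
    · show Φ (xk (k + N) + tk (k + N) • dk (k + N)) ∈ D
      have heq : xk (k + N) + tk (k + N) • dk (k + N) = x' (k + N) := by
        simp only [hdk_def, smul_inv_smul₀ (htkpos (k + N)).ne']
        abel
      rw [heq, hΦx']
      exact (hmem (k + N)).2
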